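/- For all i = 1, …, d−1 the following hold: (1) if (r_i, t_{d−i}) ∈ S, then (r_i, t_{d−i}) ∈ AP_S; (2) if (r_i, t_{d−i}) ∉ S, then (r_i, t_{d−i}) ∉ AP_S and there exist natural numbers x > r_i and y > t_{d−i} such that (x, t_{d−i}) ∈ AP_S and (r_i, y) ∈ AP_S. -/

import Mathlib

open scoped BigOperators

namespace SumsetsCurve

/-- The `s`-fold sumset of `A = {a 0, …, a (n-1)}`:
all sums of `s` elements of `A` (with `0A = {0}`). -/
def sumset (n : ℕ) (a : ℕ → ℕ) (s : ℕ) : Set ℕ :=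
  {x | ∃ f : Fin s → ℕ, (∀ i, f i < n) ∧ x = ∑ i, a (f i)}

/-- The numerical semigroup (additive submonoid of ℕ) generated by `B`. -/
def numSG (B : Set ℕ) : Set ℕ := (AddSubmonoid.closure B : AddSubmonoid ℕ)

/-- `S₁`, the numerical semigroup generated by `A`. -/
def S1 (n : ℕ) (a : ℕ → ℕ) : Set ℕ := numSG {x | ∃ i < n, a i = x}

/-- `S₂`, the numerical semigroup generated by `d - A`. -/
def S2 (n d : ℕ) (a : ℕ → ℕ) : Set ℕ := numSG {x | ∃ i < n, d - a i = x}

/-- The conductor of `S ⊆ ℕ`: the least `c` with `c + ℕ ⊆ S`. -/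
noncomputable def conductor (S : Set ℕ) : ℕ := sInf {c | ∀ m, c ≤ m → m ∈ S}

/-- The genus of `S ⊆ ℕ`: the number of gaps `|ℕ \ S|`. -/
noncomputable def genus (S : Set ℕ) : ℕ := Set.ncard {x : ℕ | x ∉ S}

/-- `C = S ∩ [0, conductor S - 2]` (the inequality is taken in ℤ). -/
def Cpart (S : Set ℕ) : Set ℕ := {x | x ∈ S ∧ (x : ℤ) ≤ (conductor S : ℤ) - 2}

/-- The decomposition `sA = C₁ ⊔ [c₁, sd - c₂] ⊔ (sd - C₂)` of the Structure Theorem,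
viewed inside ℤ. -/
def structDecomp (n d : ℕ) (a : ℕ → ℕ) (s : ℕ) : Prop :=
  (Nat.cast '' sumset n a s : Set ℤ)
      = (Nat.cast '' Cpart (S1 n a))
        ∪ Set.Icc ((conductor (S1 n a) : ℤ)) ((s * d : ℤ) - (conductor (S2 n d a) : ℤ))
        ∪ ((fun c => (s * d : ℤ) - c) '' (Nat.cast '' Cpart (S2 n d a)))
    ∧ Disjoint (Nat.cast '' Cpart (S1 n a) : Set ℤ)
        (Set.Icc ((conductor (S1 n a) : ℤ)) ((s * d : ℤ) - (conductor (S2 n d a) : ℤ)))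
    ∧ Disjoint (Nat.cast '' Cpart (S1 n a) : Set ℤ)
        ((fun c => (s * d : ℤ) - c) '' (Nat.cast '' Cpart (S2 n d a)))
    ∧ Disjoint
        (Set.Icc ((conductor (S1 n a) : ℤ)) ((s * d : ℤ) - (conductor (S2 n d a) : ℤ)))
        ((fun c => (s * d : ℤ) - c) '' (Nat.cast '' Cpart (S2 n d a)))

/-- `σ(A)`: the least `σ` such that the Structure Theorem decomposition holds
for all `s ≥ σ`. -/
noncomputable def sigmaA (n d : ℕ) (a : ℕ → ℕ) : ℕ :=
  sInf {σ | ∀ s, σ ≤ s → structDecomp n d a s}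

/-- `r(A)`: the least `r` such that `|sA| = sd + 1 - g₁ - g₂` for all `s ≥ r`
(the regularity of the Hilbert function of `k[C_A]`). -/
noncomputable def rA (n d : ℕ) (a : ℕ → ℕ) : ℕ :=
  sInf {r | ∀ s, r ≤ s →
    ((sumset n a s).ncard : ℤ)
      = (s : ℤ) * d + 1 - genus (S1 n a) - genus (S2 n d a)}

/-- The homogeneous semigroup `S ⊆ ℕ²` generated by `{(a, d-a) : a ∈ A}`. -/
def SS (n d : ℕ) (a : ℕ → ℕ) : Set (ℕ × ℕ) :=
  (AddSubmonoid.closure {p : ℕ × ℕ | ∃ i < n, p = (a i, d - a i)} : AddSubmonoid (ℕ × ℕ))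

/-- The Apery set `AP_S = {p ∈ S : p - (0,d) ∉ S, p - (d,0) ∉ S}`. -/
def APS (n d : ℕ) (a : ℕ → ℕ) : Set (ℕ × ℕ) :=
  {p ∈ SS n d a |
    (¬ ∃ q ∈ SS n d a, q + (0, d) = p) ∧ (¬ ∃ q ∈ SS n d a, q + (d, 0) = p)}

/-- The exceptional set
`E_S = {p ∈ S : p - (0,d) ∈ S, p - (d,0) ∈ S, p - (d,d) ∉ S}`. -/
def ES (n d : ℕ) (a : ℕ → ℕ) : Set (ℕ × ℕ) :=
  {p ∈ SS n d a |
    (∃ q ∈ SS n d a, q + (0, d) = p) ∧ (∃ q ∈ SS n d a, q + (d, 0) = p) ∧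
      (¬ ∃ q ∈ SS n d a, q + (d, d) = p)}

/-- The level `L_s = {(x,y) ∈ ℕ² : x + y = sd}`. -/
def Lev (d s : ℕ) : Set (ℕ × ℕ) := {p | p.1 + p.2 = s * d}

/-- `AP_s = AP_S ∩ L_s`. -/
def APs (n d : ℕ) (a : ℕ → ℕ) (s : ℕ) : Set (ℕ × ℕ) := APS n d a ∩ Lev d s

/-- `E_s = E_S ∩ L_s`. -/
def Es (n d : ℕ) (a : ℕ → ℕ) (s : ℕ) : Set (ℕ × ℕ) := ES n d a ∩ Lev d s

/-- `m(AP_S) = max {s : AP_s ≠ ∅}`. -/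
noncomputable def mAP (n d : ℕ) (a : ℕ → ℕ) : ℕ := sSup {s | APs n d a s ≠ ∅}

/-- The Apery set of `S₁` with respect to `d`: `{x ∈ S₁ : x - d ∉ S₁}`. -/
def Ap1 (n d : ℕ) (a : ℕ → ℕ) : Set ℕ := {x ∈ S1 n a | ¬ ∃ y ∈ S1 n a, y + d = x}

/-- The Apery set of `S₂` with respect to `d`: `{x ∈ S₂ : x - d ∉ S₂}`. -/
def Ap2 (n d : ℕ) (a : ℕ → ℕ) : Set ℕ := {x ∈ S2 n d a | ¬ ∃ y ∈ S2 n d a, y + d = x}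

/-- `G`, the subgroup of ℤ² generated by `S`. -/
def G (n d : ℕ) (a : ℕ → ℕ) : AddSubgroup (ℤ × ℤ) :=
  AddSubgroup.closure {p | ∃ i < n, p = ((a i : ℤ), (d : ℤ) - (a i : ℤ))}

/-- `S₁` viewed inside ℤ. -/
def S1Z (n : ℕ) (a : ℕ → ℕ) : Set ℤ := Nat.cast '' S1 n a

/-- `S₂` viewed inside ℤ. -/
def S2Z (n d : ℕ) (a : ℕ → ℕ) : Set ℤ := Nat.cast '' S2 n d a

/-- `S' = G ∩ (S₁ × S₂)`. -/
def Sprime (n d : ℕ) (a : ℕ → ℕ) : Set (ℤ × ℤ) :=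
  {p | p ∈ G n d a ∧ p.1 ∈ S1Z n a ∧ p.2 ∈ S2Z n d a}

/-- The homogeneous semigroup `S` viewed inside ℤ². -/
def SZ (n d : ℕ) (a : ℕ → ℕ) : Set (ℤ × ℤ) :=
  (fun p : ℕ × ℕ => ((p.1 : ℤ), (p.2 : ℤ))) '' SS n d a



lemma mem_numSG_of_mem {B : Set ℕ} {x : ℕ} (hx : x ∈ B) : x ∈ numSG B :=
  AddSubmonoid.subset_closure hx

lemma numSG_zero {B : Set ℕ} : (0 : ℕ) ∈ numSG B :=
  (AddSubmonoid.closure B).zero_mem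

lemma numSG_add {B : Set ℕ} {x y : ℕ} (hx : x ∈ numSG B) (hy : y ∈ numSG B) :
    x + y ∈ numSG B :=
  add_mem (show x ∈ AddSubmonoid.closure B from hx) hy

lemma SS_proj (n d : ℕ) (a : ℕ → ℕ) (hle : ∀ i < n, a i ≤ d) :
    ∀ p : ℕ × ℕ, p ∈ SS n d a →
      p.1 ∈ S1 n a ∧ p.2 ∈ S2 n d a ∧ (p.1 + p.2) % d = 0 := by
  intro p hp
  have hp' : p ∈ AddSubmonoid.closure {p : ℕ × ℕ | ∃ i < n, p = (a i, d - a i)} := hp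
  clear hp
  induction hp' using AddSubmonoid.closure_induction with
  | mem q hq =>
      obtain ⟨i, hi, rfl⟩ := hq
      refine ⟨mem_numSG_of_mem ⟨i, hi, rfl⟩, mem_numSG_of_mem ⟨i, hi, rfl⟩, ?_⟩
      have h1 := hle i hi
      have h2 : a i + (d - a i) = d := by omega
      simp [h2]
  | zero => exact ⟨numSG_zero, numSG_zero, by simp⟩
  | add x y hx hy ihx ihy =>
      refine ⟨numSG_add ihx.1 ihy.1, numSG_add ihx.2.1 ihy.2.1, ?_⟩
      have e : (x + y).1 + (x + y).2 = (x.1 + x.2) + (y.1 + y.2) := by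
        simp [Prod.fst_add, Prod.snd_add]; ring
      rw [e, Nat.add_mod, ihx.2.2, ihy.2.2]
      simp

lemma S2_lift (n d : ℕ) (a : ℕ → ℕ) :
    ∀ y ∈ S2 n d a, ∃ x, (x, y) ∈ SS n d a := by
  intro y hy
  have hy' : y ∈ AddSubmonoid.closure {x | ∃ i < n, d - a i = x} := hy
  clear hy
  induction hy' using AddSubmonoid.closure_induction with
  | mem z hz =>
      obtain ⟨i, hi, rfl⟩ := hz
      exact ⟨a i, AddSubmonoid.subset_closure ⟨i, hi, rfl⟩⟩
  | zero => exact ⟨0, (AddSubmonoid.closure _).zero_mem⟩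
  | add z w hz hw ihz ihw =>
      obtain ⟨x1, h1⟩ := ihz
      obtain ⟨x2, h2⟩ := ihw
      refine ⟨x1 + x2, ?_⟩
      have h3 := add_mem (show (x1, z) ∈ AddSubmonoid.closure
        {p : ℕ × ℕ | ∃ i < n, p = (a i, d - a i)} from h1) h2
      have e : ((x1, z) + (x2, w) : ℕ × ℕ) = (x1 + x2, z + w) := rfl
      rw [e] at h3
      exact h3

lemma S1_lift (n d : ℕ) (a : ℕ → ℕ) :
    ∀ x ∈ S1 n a, ∃ y, (x, y) ∈ SS n d a := by
  intro x hx
  have hx' : x ∈ AddSubmonoid.closure {x | ∃ i < n, a i = x} := hx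
  clear hx
  induction hx' using AddSubmonoid.closure_induction with
  | mem z hz =>
      obtain ⟨i, hi, rfl⟩ := hz
      exact ⟨d - a i, AddSubmonoid.subset_closure ⟨i, hi, rfl⟩⟩
  | zero => exact ⟨0, (AddSubmonoid.closure _).zero_mem⟩
  | add z w hz hw ihz ihw =>
      obtain ⟨y1, h1⟩ := ihz
      obtain ⟨y2, h2⟩ := ihw
      refine ⟨y1 + y2, ?_⟩
      have h3 := add_mem (show (z, y1) ∈ AddSubmonoid.closure
        {p : ℕ × ℕ | ∃ i < n, p = (a i, d - a i)} from h1) h2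
      have e : ((z, y1) + (w, y2) : ℕ × ℕ) = (z + w, y1 + y2) := rfl
      rw [e] at h3
      exact h3

lemma numSG_ap_min {B : Set ℕ} {d : ℕ} (hd : d ∈ numSG B) (hd0 : 0 < d)
    {u z : ℕ} (hnap : ¬ ∃ y ∈ numSG B, y + d = u)
    (hz : z ∈ numSG B) (hmod : z % d = u % d) : u ≤ z := by
  by_contra hlt
  push_neg at hlt
  have hdvd : d ∣ u - z := (Nat.modEq_iff_dvd' hlt.le).mp hmod
  obtain ⟨k, hk⟩ := hdvd
  obtain ⟨m, rfl⟩ : ∃ m, k = m + 1 := by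
    rcases k with _ | m
    · exfalso; omega
    · exact ⟨m, rfl⟩
  have e : d * (m + 1) = m * d + d := by ring
  refine hnap ⟨z + m * d, ?_, by omega⟩
  have hmem : m * d ∈ numSG B := by
    have h := nsmul_mem (show d ∈ AddSubmonoid.closure B from hd) m
    exact (by simpa [nsmul_eq_mul] using h : m * d ∈ AddSubmonoid.closure B)
  exact numSG_add hz hmem

lemma mod_cancel {d x t i : ℕ} (hi : i ≤ d) (h1 : (x + t) % d = 0)
    (h2 : t % d = (d - i) % d) : x % d = i % d := by
  have e2 : t ≡ (d - i) [MOD d] := h2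
  have e3 : (x + t) ≡ 0 [MOD d] := by simpa [Nat.ModEq] using h1
  have e5 : (i + t) ≡ (i + (d - i)) [MOD d] := e2.add_left i
  have e6 : i + (d - i) = d := by omega
  rw [e6] at e5
  have e7 : (i + t) ≡ 0 [MOD d] := e5.trans ((Nat.modEq_zero_iff_dvd).mpr dvd_rfl)
  exact Nat.ModEq.add_right_cancel' t (e3.trans e7.symm)

/-- For all `i = 1, …, d-1`: (1) if `(rᵢ, t_{d-i}) ∈ S` then `(rᵢ, t_{d-i}) ∈ AP_S`;
(2) if `(rᵢ, t_{d-i}) ∉ S` then `(rᵢ, t_{d-i}) ∉ AP_S` and there exist `x > rᵢ` and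
`y > t_{d-i}` with `(x, t_{d-i}) ∈ AP_S` and `(rᵢ, y) ∈ AP_S`. -/
theorem lemma_CMchar (n d : ℕ) (a : ℕ → ℕ)
    (hn : 4 ≤ n)
    (ha0 : a 0 = 0)
    (had : a (n - 1) = d)
    (hmono : ∀ i j, i < j → j ≤ n - 1 → a i < a j)
    (hgcd : (Finset.Icc 1 (n - 1)).gcd a = 1)
    (r t : ℕ → ℕ)
    (hr : ∀ i < d, r i ∈ Ap1 n d a ∧ r i % d = i % d)
    (ht : ∀ i < d, t i ∈ Ap2 n d a ∧ t i % d = i % d) :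
    ∀ i : ℕ, 1 ≤ i → i ≤ d - 1 →
      ((r i, t (d - i)) ∈ SS n d a → (r i, t (d - i)) ∈ APS n d a)
      ∧ ((r i, t (d - i)) ∉ SS n d a →
          (r i, t (d - i)) ∉ APS n d a
          ∧ (∃ x : ℕ, r i < x ∧ (x, t (d - i)) ∈ APS n d a)
          ∧ (∃ y : ℕ, t (d - i) < y ∧ (r i, y) ∈ APS n d a)) := by
  have hle : ∀ i < n, a i ≤ d := by
    intro i hi
    rcases Nat.lt_or_ge i (n - 1) with h | h
    · exact le_of_lt (had ▸ hmono i (n - 1) h le_rfl)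
    · have : i = n - 1 := by omega
      rw [this, had]
  have hdS1 : d ∈ S1 n a := mem_numSG_of_mem ⟨n - 1, by omega, had⟩
  have hdS2 : d ∈ S2 n d a := mem_numSG_of_mem ⟨0, by omega, by simp [ha0]⟩
  intro i h1 h2
  have hid : i < d := by omega
  have hd0 : 0 < d := by omega
  have hdi : d - i < d := by omega
  obtain ⟨hri, hrm⟩ := hr i hid
  obtain ⟨hti, htm⟩ := ht (d - i) hdi
  obtain ⟨hriS, hrnap⟩ := hri
  obtain ⟨htiS, htnap⟩ := hti
  have noY : ∀ x y : ℕ, (¬ ∃ s2 ∈ S2 n d a, s2 + d = y) →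
      ¬ ∃ q ∈ SS n d a, q + (0, d) = ((x : ℕ), y) := by
    rintro x y hy ⟨q, hq, hEq⟩
    have h2' : q.2 + d = y := congrArg Prod.snd hEq
    exact hy ⟨q.2, (SS_proj n d a hle q hq).2.1, h2'⟩
  have noX : ∀ x y : ℕ, (¬ ∃ s1 ∈ S1 n a, s1 + d = x) →
      ¬ ∃ q ∈ SS n d a, q + (d, 0) = ((x : ℕ), y) := by
    rintro x y hx ⟨q, hq, hEq⟩
    have h1' : q.1 + d = x := congrArg Prod.fst hEq
    exact hx ⟨q.1, (SS_proj n d a hle q hq).1, h1'⟩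
  constructor
  · intro hp
    exact ⟨hp, noY _ _ htnap, noX _ _ hrnap⟩
  · intro hp
    refine ⟨fun h => hp h.1, ?_, ?_⟩
    · -- minimal x with (x, t (d - i)) ∈ SS
      have hne : {x | (x, t (d - i)) ∈ SS n d a}.Nonempty := S2_lift n d a _ htiS
      set X := {x | (x, t (d - i)) ∈ SS n d a} with hX
      have hmem : sInf X ∈ X := Nat.sInf_mem hne
      set x0 := sInf X with hx0def
      have hmemSS : (x0, t (d - i)) ∈ SS n d a := hmem
      have hnoX : ¬ ∃ q ∈ SS n d a, q + (d, 0) = ((x0 : ℕ), t (d - i)) := by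
        rintro ⟨q, hq, hEq⟩
        have e1 : q.1 + d = x0 := congrArg Prod.fst hEq
        have e2 : q.2 = t (d - i) := by
          have := congrArg Prod.snd hEq; simpa using this
        have hq' : (q.1, t (d - i)) ∈ SS n d a := by
          rw [← e2]; exact hq
        have := Nat.sInf_le (show q.1 ∈ X from hq')
        omega
      have hproj := SS_proj n d a hle _ hmemSS
      have hx0mod : x0 % d = i % d :=
        mod_cancel hid.le hproj.2.2 htm
      have hge : r i ≤ x0 :=
        numSG_ap_min hdS1 hd0 hrnap hproj.1 (by rw [hx0mod, hrm])
      have hne' : r i ≠ x0 := by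
        intro h
        exact hp (by rw [h]; exact hmemSS)
      exact ⟨x0, lt_of_le_of_ne hge hne', hmemSS, noY _ _ htnap, hnoX⟩
    · -- minimal y with (r i, y) ∈ SS
      have hne : {y | (r i, y) ∈ SS n d a}.Nonempty := S1_lift n d a _ hriS
      set Y := {y | (r i, y) ∈ SS n d a} with hY
      have hmem : sInf Y ∈ Y := Nat.sInf_mem hne
      set y0 := sInf Y with hy0def
      have hmemSS : (r i, y0) ∈ SS n d a := hmem
      have hnoY : ¬ ∃ q ∈ SS n d a, q + (0, d) = ((r i : ℕ), y0) := by
        rintro ⟨q, hq, hEq⟩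
        have e2 : q.2 + d = y0 := congrArg Prod.snd hEq
        have e1 : q.1 = r i := by
          have := congrArg Prod.fst hEq; simpa using this
        have hq' : (r i, q.2) ∈ SS n d a := by
          rw [← e1]; exact hq
        have := Nat.sInf_le (show q.2 ∈ Y from hq')
        omega
      have hproj := SS_proj n d a hle _ hmemSS
      have hsum : (y0 + r i) % d = 0 := by
        rw [Nat.add_comm]; exact hproj.2.2
      have hdd : d - (d - i) = i := by omega
      have hy0mod : y0 % d = (d - i) % d :=
        mod_cancel hdi.le hsum (by rw [hdd]; exact hrm)
      have hge : t (d - i) ≤ y0 :=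
        numSG_ap_min hdS2 hd0 htnap hproj.2.1 (by rw [hy0mod, htm])
      have hne' : t (d - i) ≠ y0 := by
        intro h
        exact hp (by rw [h]; exact hmemSS)
      exact ⟨y0, lt_of_le_of_ne hge hne', hmemSS, hnoY, noX _ _ hrnap⟩


end SumsetsCurve
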